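/- Define z_i = min over j ∈ {i−b+1,...,i} of ( Σ_{l=j+b}^{i+τ−1} |P[l]| − Σ_{l=j}^{i−1} k_l ), and set |V[i]| = min(k_i, z_i), |U[i]| = k_i − |V[i]|, |P[i+τ]| = |U[i]|. If |P[i]| > 0 for some i ≥ τ + b, then there exists j ∈ {i−τ−b+1, ..., i−τ} such that Σ_{l=j}^{i−τ} k_l = Σ_{l=j+b}^{i} |P[l]|. -/

import Mathlib

/-- Size of the parity block `P[i]` of the `(τ,b)`-Variable-sized Generalized MS Code:
`|P[i]| = 0` for `i < τ`, `|P[i]| = k_{i−τ}` for `τ ≤ i < τ+b`, and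
`|P[i+τ]| = |U[i]| = k_i − min(k_i, z_i)` where
`z_i = min_{j ∈ {i−b+1,…,i}} (Σ_{l=j+b}^{i+τ−1} |P[l]| − Σ_{l=j}^{i−1} k_l)`. -/
noncomputable def Psize (τ b : ℕ) (k : ℕ → ℤ) : ℕ → ℤ
  | i =>
    if i < τ then 0
    else if i < τ + b then k (i - τ)
    else
      k (i - τ) - min (k (i - τ))
        (sInf ((fun j : ℕ =>
          (∑ l ∈ (Finset.Ico (j + b) i).attach, Psize τ b k l.1) -
            ∑ l ∈ Finset.Icc j (i - τ - 1), k l) '' Set.Icc (i - τ - b + 1) (i - τ)))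
  termination_by i => i
  decreasing_by exact (Finset.mem_Ico.mp l.2).2

/-- Lemma exactRec: if the `(τ,b)`-Variable-sized Generalized MS Code
sends parity at time `i ≥ τ + b` (i.e. `|P[i]| > 0`), then there is a burst start
`j ∈ {i−τ−b+1, …, i−τ}` with `Σ_{l=j}^{i−τ} k_l = Σ_{l=j+b}^{i} |P[l]|`. -/
theorem stmt10 (τ b : ℕ) (k : ℕ → ℤ) (hb : 1 ≤ b) (hbτ : b ≤ τ)
    (hk : ∀ l, 0 ≤ k l) (i : ℕ) (hi : τ + b ≤ i) (hP : 0 < Psize τ b k i) :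
    ∃ j ∈ Finset.Icc (i - τ - b + 1) (i - τ),
      ∑ l ∈ Finset.Icc j (i - τ), k l = ∑ l ∈ Finset.Icc (j + b) i, Psize τ b k l := by
  have hτi : τ ≤ i := le_trans (Nat.le_add_right _ _) hi
  set S : Set ℤ := ((fun j : ℕ =>
      (∑ l ∈ Finset.Ico (j + b) i, Psize τ b k l) -
        ∑ l ∈ Finset.Icc j (i - τ - 1), k l) '' Set.Icc (i - τ - b + 1) (i - τ)) with hS
  have hunfold : Psize τ b k i =
      k (i - τ) - min (k (i - τ)) (sInf S) := by
    rw [Psize, if_neg (by omega), if_neg (by omega)]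
    simp only [Finset.sum_attach]
    rfl
  have hS_ne : S.Nonempty :=
    ⟨_, Set.mem_image_of_mem _ (Set.mem_Icc.mpr ⟨by omega, le_refl (i - τ)⟩)⟩
  have hSbdd : BddBelow S :=
    (Set.Finite.image _ (Set.finite_Icc _ _)).bddBelow
  have hz_mem : sInf S ∈ S := Int.csInf_mem hS_ne hSbdd
  rw [hunfold] at hP
  have hz : sInf S < k (i - τ) := by
    rcases min_lt_iff.mp (sub_pos.mp hP) with h | h
    · exact absurd h (lt_irrefl _)
    · exact h
  have hPi : Psize τ b k i = k (i - τ) - sInf S := by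
    rw [hunfold, min_eq_right hz.le]
  obtain ⟨j₀, hj₀mem, hj₀⟩ := hz_mem
  rw [Set.mem_Icc] at hj₀mem
  refine ⟨j₀, Finset.mem_Icc.mpr hj₀mem, ?_⟩
  have h1 : j₀ + b ≤ i := by omega
  have h2 : j₀ ≤ i - τ := hj₀mem.2
  have hIcc : Finset.Icc j₀ (i - τ - 1) = Finset.Ico j₀ (i - τ) := by
    rw [← Finset.Ico_add_one_right_eq_Icc]
    congr 1
    omega
  simp only [hIcc] at hj₀
  have hL : ∑ l ∈ Finset.Icc j₀ (i - τ), k l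
      = (∑ l ∈ Finset.Ico j₀ (i - τ), k l) + k (i - τ) := by
    rw [← Finset.Ico_add_one_right_eq_Icc, Finset.sum_Ico_succ_top h2]
  have hR : ∑ l ∈ Finset.Icc (j₀ + b) i, Psize τ b k l
      = (∑ l ∈ Finset.Ico (j₀ + b) i, Psize τ b k l) + Psize τ b k i := by
    rw [← Finset.Ico_add_one_right_eq_Icc, Finset.sum_Ico_succ_top h1]
  rw [hL, hR, hPi]
  linarith [hj₀]
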